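/- Let μ be a locally k-uniform measure in ℝ^{n+1}, 0 ∈ supp μ, 0 < r < 1/2, with supp μ ∩ B(0,r₀) the graph of a C² function φ : ℝ^k → ℝ^{n+1−k}, φ(0) = 0, ∇φ_j(0) = 0. Then for every unit vector e ∈ S^{k−1} × {0}^{n+1−k}: Σ_{j=k+1}^{n+1} b_{0,r}^j ⟨∇²φ_j(0) e, e⟩ = 1 − Q_{0,r}(e), where b_{0,r} = ((k+2)/(2ω_k r^{k+2})) ∫_{B(0,r)} (r² − |y|²) y dμ(y) and Q_{0,r}(x) = ((k+2)/(ω_k r^{k+2})) ∫_{B(0,r)} ⟨x, y⟩² dμ(y). -/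

import Mathlib

open MeasureTheory Metric Set Filter Module
open scoped RealInnerProductSpace Topology ENNReal

noncomputable section

/-- `ℝ^{n+1}` as a Euclidean space. -/
abbrev Eu (n : ℕ) := EuclideanSpace ℝ (Fin (n + 1))

/-- `ω_k`: the Lebesgue measure of the unit ball in `ℝ^k`. -/
def unitBallVol (k : ℕ) : ℝ := (volume (ball (0 : EuclideanSpace ℝ (Fin k)) 1)).toReal

/-- The (topological) support of a measure on a metric space. -/
def msupp {X : Type*} [MetricSpace X] [MeasurableSpace X] (μ : Measure X) : Set X :=
  {x | ∀ r : ℝ, 0 < r → 0 < μ (ball x r)}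

/-- `μ` is locally `k`-uniform: `μ(B(x,r)) = ω_k r^k` for `x ∈ supp μ`, `0 < r ≤ 1`. -/
def LocUniform (n k : ℕ) (μ : Measure (Eu n)) : Prop :=
  ∀ x ∈ msupp μ, ∀ r : ℝ, 0 < r → r ≤ 1 →
    μ (ball x r) = ENNReal.ofReal (unitBallVol k * r ^ k)

/-- `μ` is locally uniformly distributed. -/
def LocUnifDist (n : ℕ) (μ : Measure (Eu n)) : Prop :=
  ∀ x ∈ msupp μ, ∀ y ∈ msupp μ, ∀ r : ℝ, 0 < r → r ≤ 1 →
    0 < μ (ball x r) ∧ μ (ball x r) = μ (ball y r) ∧ μ (ball x r) < ⊤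

/-- The graph map of `φ` over `ℝ^k × {0}^{n+1-k}`: `x' ↦ (x', φ(x'))`. -/
def graphMap (n k : ℕ) (φ : Fin (n + 1) → EuclideanSpace ℝ (Fin k) → ℝ) :
    EuclideanSpace ℝ (Fin k) → Eu n := fun x' =>
  (EuclideanSpace.equiv (Fin (n + 1)) ℝ).symm
    (fun j => if h : (j : ℕ) < k then x' ⟨j, h⟩ else φ j x')

/-- The Laplacian of a scalar function at `0`. -/
def lap0 (k : ℕ) (f : EuclideanSpace ℝ (Fin k) → ℝ) : ℝ :=
  ∑ i : Fin k, fderiv ℝ (fun x => fderiv ℝ f x (EuclideanSpace.single i 1)) 0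
    (EuclideanSpace.single i 1)


set_option maxHeartbeats 2000000

variable {n k : ℕ} {μ : Measure (Eu n)}

lemma Ebound (t u : ℝ) :
    |(max (t+u) 0)^2 - (max t 0)^2 - 2*(max t 0)*u - (if 0 < t then u^2 else 0)|
      ≤ (if |t| ≤ |u| then u^2 else 0) := by
  rcases le_or_gt (t+u) 0 with h1 | h1 <;> rcases le_or_gt t 0 with h2 | h2
  · rw [max_eq_right h1, max_eq_right h2, if_neg (not_lt.2 h2)]
    simp only [ne_eq, zero_pow, sub_zero, mul_zero, zero_mul, sub_self, zero_sub, abs_zero]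
    split
    · positivity
    · simp
  · rw [max_eq_right h1, max_eq_left h2.le, if_pos h2,
      if_pos (by rw [abs_of_pos h2, abs_of_nonpos (by linarith)]; linarith)]
    rw [abs_le]; constructor <;> nlinarith
  · rw [max_eq_left h1.le, max_eq_right h2, if_neg (not_lt.2 h2),
      if_pos (by rw [abs_of_nonpos h2, abs_of_pos (by linarith : (0:ℝ) < u)]; linarith)]
    rw [abs_le]; constructor <;> nlinarith
  · rw [max_eq_left h1.le, max_eq_left h2.le, if_pos h2]
    have : (t+u)^2 - t^2 - 2*t*u - u^2 = 0 := by ring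
    rw [this, abs_zero]
    split
    · positivity
    · exact le_refl 0

lemma pow_sub_pow_le' (k : ℕ) {a b : ℝ} (h0 : 0 ≤ b) (h : b ≤ a) (ha : a ≤ 1) :
    a^k - b^k ≤ k*(a-b) := by
  induction k with
  | zero => simp
  | succ k ih =>
    have hd : 0 ≤ a^k - b^k := sub_nonneg.2 (pow_le_pow_left₀ h0 h k)
    have : a^(k+1) - b^(k+1) = a*(a^k - b^k) + (a-b)*b^k := by ring
    rw [this]
    push_cast
    have h1 : b^k ≤ 1 := pow_le_one₀ h0 (h.trans ha)
    nlinarith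

lemma const_div_tendsto {c L : ℝ} (h : Tendsto (fun ε => c/ε) (𝓝[>] (0:ℝ)) (𝓝 L)) : c = 0 := by
  have h2 : Tendsto (fun ε : ℝ => ε * (c/ε)) (𝓝[>] (0:ℝ)) (𝓝 (0 * L)) :=
    (tendsto_id.mono_left nhdsWithin_le_nhds).mul h
  have h3 : (fun ε : ℝ => ε * (c/ε)) =ᶠ[𝓝[>] (0:ℝ)] fun _ => c := by
    filter_upwards [self_mem_nhdsWithin] with ε (hε : 0 < ε)
    field_simp
  rw [Filter.tendsto_congr' h3, zero_mul] at h2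
  exact tendsto_nhds_unique tendsto_const_nhds h2

lemma superlevel_meas (hμ : LocUniform n k μ) {x : Eu n} (hx : x ∈ msupp μ)
    {r : ℝ} (hr0 : 0 < r) (hr1 : r ≤ 1) {s : ℝ} (hs : 0 < s) :
    μ {y | s < r^2 - ‖y-x‖^2}
      = if s < r^2 then ENNReal.ofReal (unitBallVol k * (Real.sqrt (r^2 - s))^k) else 0 := by
  split_ifs with h
  · have hpos : 0 < Real.sqrt (r^2 - s) := Real.sqrt_pos.2 (by linarith)
    have hle : Real.sqrt (r^2 - s) ≤ 1 := by
      rw [show (1:ℝ) = Real.sqrt 1 by simp]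
      apply Real.sqrt_le_sqrt; nlinarith
    have hset : {y : Eu n | s < r^2 - ‖y-x‖^2} = ball x (Real.sqrt (r^2 - s)) := by
      ext y
      simp only [mem_setOf_eq, mem_ball, dist_eq_norm]
      rw [show (s < r^2 - ‖y-x‖^2) ↔ (‖y-x‖^2 < r^2 - s) by constructor <;> intro <;> linarith,
        ← Real.lt_sqrt (norm_nonneg _)]
    rw [hset, hμ x hx _ hpos hle]
  · have hset : {y : Eu n | s < r^2 - ‖y-x‖^2} = ∅ := by
      ext y
      simp only [mem_setOf_eq, mem_empty_iff_false, iff_false, not_lt]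
      nlinarith [sq_nonneg ‖y-x‖]
    rw [hset, measure_empty]

lemma sq_max_lt_iff {t : ℝ} (ht : 0 < t) (a : ℝ) : t < (max a 0)^2 ↔ Real.sqrt t < a := by
  constructor
  · intro h
    rcases le_or_gt a 0 with ha | ha
    · rw [max_eq_right ha] at h; nlinarith
    · rw [max_eq_left ha.le] at h
      calc Real.sqrt t < Real.sqrt (a^2) := Real.sqrt_lt_sqrt ht.le h
        _ = a := by rw [Real.sqrt_sq ha.le]
  · intro h
    have ha : 0 < a := lt_of_le_of_lt (Real.sqrt_nonneg t) h
    rw [max_eq_left ha.le]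
    calc t = Real.sqrt t ^ 2 := (Real.sq_sqrt ht.le).symm
      _ < a^2 := by nlinarith [Real.sqrt_nonneg t]

lemma G_const (hμ : LocUniform n k μ) {x : Eu n} (hx : x ∈ msupp μ)
    (h0 : (0:Eu n) ∈ msupp μ) {r : ℝ} (hr0 : 0 < r) (hr1 : r ≤ 1) :
    ∫ y, (max (r^2 - ‖y-x‖^2) 0)^2 ∂μ = ∫ y, (max (r^2 - ‖y‖^2) 0)^2 ∂μ := by
  have hcont : ∀ z : Eu n, Continuous (fun y : Eu n => (max (r^2 - ‖y-z‖^2) 0)^2 : Eu n → ℝ) := by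
    intro z; fun_prop
  have hlint : ∀ z ∈ msupp μ,
      ∫⁻ y, ENNReal.ofReal ((max (r^2 - ‖y-z‖^2) 0)^2) ∂μ
        = ∫⁻ t in Ioi (0:ℝ), (if Real.sqrt t < r^2 then
            ENNReal.ofReal (unitBallVol k * (Real.sqrt (r^2 - Real.sqrt t))^k) else 0) := by
    intro z hz
    rw [lintegral_eq_lintegral_meas_lt μ (Filter.Eventually.of_forall fun y => by positivity)
      (hcont z).aemeasurable]
    apply setLIntegral_congr_fun measurableSet_Ioi
    intro t (ht : 0 < t)
    have : {a : Eu n | t < (max (r^2 - ‖a-z‖^2) 0)^2} = {y | Real.sqrt t < r^2 - ‖y-z‖^2} := by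
      ext y; simp only [mem_setOf_eq, sq_max_lt_iff ht]
    dsimp only
    rw [this, superlevel_meas hμ hz hr0 hr1 (Real.sqrt_pos.2 ht)]
  have h00 : ∫ y, (max (r^2 - ‖y‖^2) 0)^2 ∂μ = ∫ y, (max (r^2 - ‖y-(0:Eu n)‖^2) 0)^2 ∂μ := by
    simp
  rw [h00,
    integral_eq_lintegral_of_nonneg_ae (Filter.Eventually.of_forall fun y => by positivity)
      (hcont x).aestronglyMeasurable,
    integral_eq_lintegral_of_nonneg_ae (Filter.Eventually.of_forall fun y => by positivity)
      ((hcont 0).aestronglyMeasurable),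
    hlint x hx, hlint 0 h0]

-- the 1-d integral computation
lemma sqrt_int_eq {r : ℝ} (hr0 : 0 < r) (k : ℕ) :
    ∫ t in Ioo (0:ℝ) (r^2), Real.sqrt (r^2 - t)^k
      = 2 * r^(k+2) / ((k:ℝ)+2) := by
  rw [← integral_Ioc_eq_integral_Ioo, ← intervalIntegral.integral_of_le (by positivity)]
  rw [show (fun t => Real.sqrt (r^2 - t)^k) = fun t => (fun s => Real.sqrt s ^ k) (r^2 - t) from rfl]
  rw [intervalIntegral.integral_comp_sub_left (fun s => Real.sqrt s ^ k) (r^2)]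
  simp only [sub_self, sub_zero]
  have hcongr : ∀ x ∈ uIcc (0:ℝ) (r^2), Real.sqrt x ^ k = x ^ ((k:ℝ)/2) := by
    intro x hx
    rw [uIcc_of_le (by positivity)] at hx
    rw [Real.sqrt_eq_rpow, ← Real.rpow_natCast (x ^ ((1:ℝ)/2)) k, ← Real.rpow_mul hx.1]
    congr 1
    push_cast
    ring
  rw [intervalIntegral.integral_congr hcongr, integral_rpow (Or.inl (lt_of_lt_of_le (by norm_num) (by positivity : (0:ℝ) ≤ (k:ℝ)/2)))]
  rw [Real.zero_rpow (by positivity), ← Real.rpow_natCast r (k+2)]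
  rw [show ((r:ℝ)^2) = r ^ ((2:ℕ):ℝ) by rw [Real.rpow_natCast], ← Real.rpow_mul hr0.le]
  rw [show ((2:ℕ):ℝ) * ((k:ℝ)/2 + 1) = ((k:ℝ)+2) by push_cast; ring]
  rw [show (((k:ℕ)+2:ℕ):ℝ) = ((k:ℝ)+2) by push_cast; ring]
  field_simp
  ring

lemma unitBallVol_nonneg (k : ℕ) : 0 ≤ unitBallVol k := ENNReal.toReal_nonneg

lemma M0_val (hμ : LocUniform n k μ) (h0 : (0:Eu n) ∈ msupp μ)
    {r : ℝ} (hr0 : 0 < r) (hr1 : r ≤ 1) :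
    ∫ y in ball (0:Eu n) r, (r^2 - ‖y‖^2) ∂μ = 2 * unitBallVol k * r^(k+2) / ((k:ℝ)+2) := by
  have hp : ∀ y : Eu n, y ∉ ball (0:Eu n) r → max (r^2 - ‖y‖^2) 0 = 0 := by
    intro y hy
    rw [mem_ball, dist_eq_norm, sub_zero, not_lt] at hy
    apply max_eq_right
    nlinarith [norm_nonneg y]
  have h1 : ∫ y in ball (0:Eu n) r, (r^2 - ‖y‖^2) ∂μ = ∫ y, max (r^2 - ‖y‖^2) 0 ∂μ := by
    rw [← setIntegral_eq_integral_of_forall_compl_eq_zero (s := ball (0:Eu n) r) (fun y hy => hp y hy)]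
    apply setIntegral_congr_fun measurableSet_ball
    intro y hy
    rw [mem_ball, dist_eq_norm, sub_zero] at hy
    dsimp only
    rw [max_eq_left]
    nlinarith [norm_nonneg y]
  rw [h1]
  have hcont : Continuous (fun y : Eu n => max (r^2 - ‖y‖^2) 0) := by fun_prop
  have h2 : ∫ y, max (r^2 - ‖y‖^2) 0 ∂μ
      = (∫⁻ y, ENNReal.ofReal (max (r^2 - ‖y‖^2) 0) ∂μ).toReal :=
    integral_eq_lintegral_of_nonneg_ae (Filter.Eventually.of_forall fun y => le_max_right _ _)
      hcont.aestronglyMeasurable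
  rw [h2, lintegral_eq_lintegral_meas_lt (f := fun y : Eu n => max (r^2 - ‖y‖^2) 0) μ (Filter.Eventually.of_forall fun y => le_max_right _ _)
    hcont.aemeasurable]
  have hlevel : ∀ t ∈ Ioi (0:ℝ), μ {a : Eu n | t < max (r^2 - ‖a‖^2) 0}
      = (if t < r^2 then ENNReal.ofReal (unitBallVol k * (Real.sqrt (r^2 - t))^k) else 0) := by
    intro t (ht : 0 < t)
    have : {a : Eu n | t < max (r^2 - ‖a‖^2) 0} = {y : Eu n | t < r^2 - ‖y - 0‖^2} := by
      ext y
      simp only [mem_setOf_eq, sub_zero, lt_max_iff]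
      constructor
      · rintro (h | h); · exact h
        · linarith
      · intro h; exact Or.inl h
    rw [this, superlevel_meas hμ h0 hr0 hr1 ht]
  rw [setLIntegral_congr_fun measurableSet_Ioi hlevel]
  have hsplit : (Ioi (0:ℝ)) = Ioo (0:ℝ) (r^2) ∪ Ici (r^2) := by
    rw [Ioo_union_Ici_eq_Ioi (by positivity)]
  rw [hsplit, lintegral_union measurableSet_Ici (by
      rw [Set.disjoint_iff]
      rintro t ⟨⟨_, h1⟩, (h2 : r^2 ≤ t)⟩
      exact absurd h2 (not_le.2 h1))]
  have hzero : ∫⁻ t in Ici (r^2), (if t < r^2 then ENNReal.ofReal (unitBallVol k * (Real.sqrt (r^2 - t))^k) else 0) = 0 := by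
    rw [setLIntegral_congr_fun measurableSet_Ici (fun t (ht : r^2 ≤ t) => if_neg (not_lt.2 ht))]
    simp
  rw [hzero, add_zero]
  have hcongr2 : ∫⁻ t in Ioo (0:ℝ) (r^2), (if t < r^2 then ENNReal.ofReal (unitBallVol k * (Real.sqrt (r^2 - t))^k) else 0)
      = ∫⁻ t in Ioo (0:ℝ) (r^2), ENNReal.ofReal (unitBallVol k * (Real.sqrt (r^2 - t))^k) := by
    apply setLIntegral_congr_fun measurableSet_Ioo
    exact (fun t ht => if_pos ht.2)
  rw [hcongr2]
  have hint : IntegrableOn (fun t => unitBallVol k * (Real.sqrt (r^2 - t))^k) (Ioo (0:ℝ) (r^2)) volume := by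
    apply (Continuous.integrableOn_Icc (by fun_prop)).mono_set Ioo_subset_Icc_self
  rw [← ofReal_integral_eq_lintegral_ofReal hint
    (Filter.Eventually.of_forall (fun t => mul_nonneg (unitBallVol_nonneg k) (by positivity)))]
  rw [MeasureTheory.integral_const_mul, sqrt_int_eq hr0 k, ENNReal.toReal_ofReal (mul_nonneg (unitBallVol_nonneg k) (by positivity))]
  ring

lemma abs_int_le {α : Type*} [MeasurableSpace α] (ν : Measure α) (f : α → ℝ) :
    |∫ a, f a ∂ν| ≤ ∫ a, |f a| ∂ν := by
  simpa [Real.norm_eq_abs] using norm_integral_le_integral_norm (μ := ν) f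

lemma integrableOn_ball_of_continuous [IsLocallyFiniteMeasure μ] {f : Eu n → ℝ}
    (hf : Continuous f) {s : ℝ} (hs : s ≤ 1) : IntegrableOn f (ball (0:Eu n) s) μ :=
  (hf.continuousOn.integrableOn_compact (isCompact_closedBall (0:Eu n) 1)).mono_set
    (fun y hy => by
      rw [mem_ball] at hy
      rw [mem_closedBall]
      exact le_trans hy.le hs)

lemma annulus_est (hμ : LocUniform n k μ) (h0 : (0:Eu n) ∈ msupp μ) {r c : ℝ}
    (hr0 : 0 < r) (hr : r < 1/2) (hc0 : 0 < c) (hc8 : c ≤ 1/8) (hcr : c ≤ r^2/8) :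
    μ {y : Eu n | |r^2 - ‖y‖^2| ≤ 3*c} ≤ ENNReal.ofReal (unitBallVol k * (k * (18*c/r))) := by
  set s₁ : ℝ := Real.sqrt (r^2 - 3*c) with hs₁
  set s₂ : ℝ := Real.sqrt (r^2 + 6*c) with hs₂
  have h3x : 3*c ≤ r^2/2 := by linarith
  have hs1sq : s₁^2 = r^2 - 3*c := Real.sq_sqrt (by nlinarith)
  have hs2sq : s₂^2 = r^2 + 6*c := Real.sq_sqrt (by nlinarith)
  have hs1nn : 0 ≤ s₁ := Real.sqrt_nonneg _
  have hs2nn : 0 ≤ s₂ := Real.sqrt_nonneg _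
  have hs12 : s₁ ≤ s₂ := Real.sqrt_le_sqrt (by nlinarith)
  have hs1r : r/2 ≤ s₁ := by nlinarith
  have hs2le1 : s₂ ≤ 1 := by
    rw [hs₂, show (1:ℝ) = Real.sqrt 1 by simp]
    apply Real.sqrt_le_sqrt; nlinarith
  have hs1pos : 0 < s₁ := lt_of_lt_of_le (by positivity) hs1r
  have hsub : {y : Eu n | |r^2 - ‖y‖^2| ≤ 3*c} ⊆ ball (0:Eu n) s₂ \ ball (0:Eu n) s₁ := by
    intro y hy2
    rw [mem_setOf_eq, abs_le] at hy2
    constructor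
    · rw [mem_ball, dist_eq_norm, sub_zero]
      nlinarith [norm_nonneg y, hy2.1, hy2.2]
    · rw [mem_ball, dist_eq_norm, sub_zero, not_lt]
      nlinarith [norm_nonneg y, hy2.1, hy2.2]
  have hs1fin : μ (ball (0:Eu n) s₁) ≠ ⊤ := by
    rw [hμ 0 h0 s₁ hs1pos (hs12.trans hs2le1)]
    exact ENNReal.ofReal_ne_top
  refine le_trans (measure_mono hsub) ?_
  rw [measure_diff (ball_subset_ball hs12) measurableSet_ball.nullMeasurableSet hs1fin,
    hμ 0 h0 s₂ (lt_of_lt_of_le hs1pos hs12) hs2le1, hμ 0 h0 s₁ hs1pos (hs12.trans hs2le1),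
    ← ENNReal.ofReal_sub _ (mul_nonneg (unitBallVol_nonneg k) (by positivity))]
  apply ENNReal.ofReal_le_ofReal
  have hpow : s₂^k - s₁^k ≤ k*(s₂-s₁) := pow_sub_pow_le' k hs1nn hs12 hs2le1
  have hdiff : s₂ - s₁ ≤ 18*c/r := by
    have h9 : (s₂-s₁)*(s₂+s₁) = 9*c := by nlinarith
    rw [le_div_iff₀ hr0]
    nlinarith
  have heq : unitBallVol k * s₂^k - unitBallVol k * s₁^k
      = unitBallVol k * (s₂^k - s₁^k) := by ring
  rw [heq]
  have hknn : (0:ℝ) ≤ k := Nat.cast_nonneg k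
  apply mul_le_mul_of_nonneg_left _ (unitBallVol_nonneg k)
  refine le_trans hpow ?_
  apply mul_le_mul_of_nonneg_left hdiff hknn

lemma key_est [IsLocallyFiniteMeasure μ] (hμ : LocUniform n k μ) (h0 : (0:Eu n) ∈ msupp μ)
    {r : ℝ} (hr0 : 0 < r) (hr : r < 1/2) :
    ∃ C : ℝ, ∀ x ∈ msupp μ, 0 < ‖x‖ → ‖x‖ ≤ min (1/8) (r^2/8) →
      |4 * (∫ y in ball (0:Eu n) r, (r^2-‖y‖^2) * ⟪x,y⟫ ∂μ)
        - 2*‖x‖^2 * (∫ y in ball (0:Eu n) r, (r^2-‖y‖^2) ∂μ)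
        + 4 * (∫ y in ball (0:Eu n) r, ⟪x,y⟫^2 ∂μ)| ≤ C * ‖x‖^3 := by
  have hr1 : r ≤ 1 := by linarith
  set B1 := ball (0:Eu n) 1 with hB1
  set Br := ball (0:Eu n) r with hBr
  have hBrB1 : Br ⊆ B1 := ball_subset_ball hr1
  refine ⟨4*(∫ y in Br, ‖y‖ ∂μ) + (μ Br).toReal + 162*k*unitBallVol k/r, ?_⟩
  intro x hx hx0 hxle
  rw [le_min_iff] at hxle
  obtain ⟨hx8, hxr⟩ := hxle
  have hx1 : ‖x‖ ≤ 1 := by linarith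
  -- functions
  set u : Eu n → ℝ := fun y => 2*⟪x,y⟫ - ‖x‖^2 with hu
  set p : Eu n → ℝ := fun y => max (r^2 - ‖y‖^2) 0 with hp
  set gx : Eu n → ℝ := fun y => (max (r^2 - ‖y-x‖^2) 0)^2 with hgx
  set g0 : Eu n → ℝ := fun y => (max (r^2 - ‖y‖^2) 0)^2 with hg0
  set E : Eu n → ℝ := fun y => gx y - g0 y - 2*(p y)*(u y)
      - Set.indicator Br (fun y => (u y)^2) y with hE
  have hcont_u : Continuous u := by
    apply Continuous.sub _ continuous_const
    exact continuous_const.mul ((continuous_const : Continuous fun _ : Eu n => x).inner continuous_id)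
  have hcont_in : Continuous (fun y : Eu n => (⟪x,y⟫:ℝ)) := continuous_const.inner continuous_id
  have hcont_p : Continuous p := by fun_prop
  have hcont_gx : Continuous gx := by fun_prop
  have hcont_g0 : Continuous g0 := by fun_prop
  -- algebraic identity: r^2 - ‖y-x‖^2 = (r^2 - ‖y‖^2) + u y
  have halg : ∀ y : Eu n, r^2 - ‖y-x‖^2 = (r^2 - ‖y‖^2) + u y := by
    intro y
    have h1 := norm_sub_sq_real y x
    have h2 : (inner ℝ y x : ℝ) = inner ℝ x y := (real_inner_comm y x).symm
    simp only [hu]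
    linarith
  -- indicator = if form
  have hind : ∀ y : Eu n, Set.indicator Br (fun y => (u y)^2) y
      = (if 0 < r^2 - ‖y‖^2 then (u y)^2 else 0) := by
    intro y
    by_cases hy : y ∈ Br
    · rw [Set.indicator_of_mem hy, if_pos]
      rw [hBr, mem_ball, dist_eq_norm, sub_zero] at hy
      nlinarith [norm_nonneg y]
    · rw [Set.indicator_of_notMem hy, if_neg]
      rw [hBr, mem_ball, dist_eq_norm, sub_zero, not_lt] at hy
      intro hcon
      nlinarith [norm_nonneg y]
  -- pointwise error bound
  have hEbd : ∀ y : Eu n, |E y| ≤ (if |r^2-‖y‖^2| ≤ |u y| then (u y)^2 else 0) := by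
    intro y
    have := Ebound (r^2 - ‖y‖^2) (u y)
    rw [← halg y] at this
    simpa only [hE, hgx, hg0, hind y] using this
  -- E vanishes basics done; integrability on B1
  have hfin : μ B1 ≠ ⊤ := by
    have h2 := (isCompact_closedBall (0:Eu n) 1).measure_lt_top (μ := μ)
    exact ne_of_lt (lt_of_le_of_lt (measure_mono ball_subset_closedBall) h2)
  have hint_gx : IntegrableOn gx B1 μ := integrableOn_ball_of_continuous hcont_gx le_rfl
  have hint_g0 : IntegrableOn g0 B1 μ := integrableOn_ball_of_continuous hcont_g0 le_rfl
  have hint_pu : IntegrableOn (fun y => 2*(p y)*(u y)) B1 μ :=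
    integrableOn_ball_of_continuous (by fun_prop) le_rfl
  have hint_ind : IntegrableOn (fun y => Set.indicator Br (fun y => (u y)^2) y) B1 μ := by
    apply Integrable.indicator _ measurableSet_ball
    exact integrableOn_ball_of_continuous (by fun_prop) le_rfl
  have hint_E : IntegrableOn E B1 μ := by
    apply Integrable.sub (Integrable.sub (Integrable.sub hint_gx hint_g0) hint_pu) hint_ind
  -- the vanishing of ∫ gx - g0 over B1
  have hsupp_gx : ∀ y : Eu n, y ∉ B1 → gx y = 0 := by
    intro y hy
    rw [hB1, mem_ball, dist_eq_norm, sub_zero, not_lt] at hy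
    have hge : r ≤ ‖y - x‖ := by
      have h3 := norm_sub_norm_le y x
      linarith
    simp only [hgx]
    rw [max_eq_right (by nlinarith [norm_nonneg (y-x)])]
    norm_num
  have hsupp_g0 : ∀ y : Eu n, y ∉ B1 → g0 y = 0 := by
    intro y hy
    rw [hB1, mem_ball, dist_eq_norm, sub_zero, not_lt] at hy
    simp only [hg0]
    rw [max_eq_right (by nlinarith)]
    norm_num
  have hzero : ∫ y in B1, (gx y - g0 y) ∂μ = 0 := by
    rw [integral_sub hint_gx hint_g0,
      setIntegral_eq_integral_of_forall_compl_eq_zero (fun y hy => hsupp_gx y hy),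
      setIntegral_eq_integral_of_forall_compl_eq_zero (fun y hy => hsupp_g0 y hy),
      G_const hμ hx h0 hr0 hr1, sub_self]
  -- split
  have hsplit : ∫ y in B1, (gx y - g0 y) ∂μ
      = 2 * (∫ y in B1, (p y)*(u y) ∂μ) + (∫ y in B1, Set.indicator Br (fun y => (u y)^2) y ∂μ)
        + ∫ y in B1, E y ∂μ := by
    have hpw : ∀ y : Eu n, gx y - g0 y = 2*((p y)*(u y)) + Set.indicator Br (fun y => (u y)^2) y + E y := by
      intro y; simp only [hE]; ring
    rw [MeasureTheory.setIntegral_congr_fun measurableSet_ball (fun y _ => hpw y)]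
    have hI1 : IntegrableOn (fun y => 2*((p y)*(u y)) + Set.indicator Br (fun y => (u y)^2) y) B1 μ := by
      apply Integrable.add _ hint_ind
      exact integrableOn_ball_of_continuous (by fun_prop) le_rfl
    rw [integral_add hI1 hint_E, integral_add (integrableOn_ball_of_continuous (by fun_prop) le_rfl) hint_ind,
      MeasureTheory.integral_const_mul]
  have hkey : 2 * (∫ y in B1, (p y)*(u y) ∂μ) + (∫ y in B1, Set.indicator Br (fun y => (u y)^2) y ∂μ)
      + (∫ y in B1, E y ∂μ) = 0 := by rw [← hsplit, hzero]
  -- convert the two main integrals to ball-r integrals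
  have hconv1 : ∫ y in B1, (p y)*(u y) ∂μ = ∫ y in Br, (r^2-‖y‖^2) * (u y) ∂μ := by
    have hpw : ∀ y : Eu n, (p y)*(u y) = Set.indicator Br (fun y => (r^2-‖y‖^2) * u y) y := by
      intro y
      by_cases hy : y ∈ Br
      · rw [Set.indicator_of_mem hy]
        rw [hBr, mem_ball, dist_eq_norm, sub_zero] at hy
        simp only [hp]
        rw [max_eq_left (by nlinarith [norm_nonneg y])]
      · rw [Set.indicator_of_notMem hy]
        rw [hBr, mem_ball, dist_eq_norm, sub_zero, not_lt] at hy
        simp only [hp]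
        rw [max_eq_right (by nlinarith [norm_nonneg y]), zero_mul]
    rw [MeasureTheory.setIntegral_congr_fun measurableSet_ball (fun y _ => hpw y),
      MeasureTheory.setIntegral_indicator measurableSet_ball,
      Set.inter_eq_self_of_subset_right hBrB1]
  have hconv2 : ∫ y in B1, Set.indicator Br (fun y => (u y)^2) y ∂μ = ∫ y in Br, (u y)^2 ∂μ := by
    rw [MeasureTheory.setIntegral_indicator measurableSet_ball,
      Set.inter_eq_self_of_subset_right hBrB1]
  -- expansions over ball r
  have hIr : ∀ f : Eu n → ℝ, Continuous f → IntegrableOn f Br μ := by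
    intro f hf; exact integrableOn_ball_of_continuous hf hr1
  have hPU : ∫ y in Br, (r^2-‖y‖^2) * (u y) ∂μ
      = 2 * (∫ y in Br, (r^2-‖y‖^2) * ⟪x,y⟫ ∂μ) - ‖x‖^2 * (∫ y in Br, (r^2-‖y‖^2) ∂μ) := by
    have hpw : ∀ y : Eu n, (r^2-‖y‖^2) * (u y)
        = 2*((r^2-‖y‖^2) * ⟪x,y⟫) - ‖x‖^2*(r^2-‖y‖^2) := by
      intro y; simp only [hu]; ring
    rw [MeasureTheory.setIntegral_congr_fun measurableSet_ball (fun y _ => hpw y),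
      integral_sub (hIr (fun y => 2*((r^2-‖y‖^2) * ⟪x,y⟫)) (continuous_const.mul ((continuous_const.sub (by fun_prop)).mul hcont_in)))
        (hIr (fun y => ‖x‖^2*(r^2-‖y‖^2)) (continuous_const.mul (continuous_const.sub (by fun_prop)))),
      MeasureTheory.integral_const_mul, MeasureTheory.integral_const_mul]
  have hU2 : ∫ y in Br, (u y)^2 ∂μ
      = 4 * (∫ y in Br, ⟪x,y⟫^2 ∂μ) - 4*‖x‖^2 * (∫ y in Br, ⟪x,y⟫ ∂μ)
        + ‖x‖^4 * (μ Br).toReal := by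
    haveI : IsFiniteMeasure (μ.restrict Br) := by
      refine ⟨?_⟩
      rw [Measure.restrict_apply_univ]
      exact lt_of_le_of_lt (measure_mono hBrB1) (lt_top_iff_ne_top.2 hfin)
    have hpw : ∀ y : Eu n, (u y)^2 = (4*(⟪x,y⟫^2) - 4*‖x‖^2*⟪x,y⟫) + ‖x‖^4 := by
      intro y; simp only [hu]; ring
    have hIa : IntegrableOn (fun y => 4*((⟪x,y⟫:ℝ)^2)) Br μ :=
      hIr _ (continuous_const.mul (hcont_in.pow 2))
    have hIb : IntegrableOn (fun y => 4*‖x‖^2*(⟪x,y⟫:ℝ)) Br μ :=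
      hIr _ (continuous_const.mul hcont_in)
    have hIab : IntegrableOn (fun y => 4*((⟪x,y⟫:ℝ)^2) - 4*‖x‖^2*(⟪x,y⟫:ℝ)) Br μ :=
      hIa.sub hIb
    rw [MeasureTheory.setIntegral_congr_fun measurableSet_ball (fun y _ => hpw y),
      integral_add hIab (integrable_const _),
      integral_sub hIa hIb,
      MeasureTheory.integral_const_mul, MeasureTheory.integral_const_mul,
      MeasureTheory.setIntegral_const, smul_eq_mul, measureReal_def]
    ring
  -- bound on ∫ E
  set D : Set (Eu n) := {y | |r^2 - ‖y‖^2| ≤ 3*‖x‖} with hD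
  have hmeasD : MeasurableSet D := by
    apply measurableSet_le (by fun_prop) measurable_const
  have hED : ∀ y ∈ B1, |E y| ≤ Set.indicator D (fun _ => 9*‖x‖^2) y := by
    intro y hy
    rw [hB1, mem_ball, dist_eq_norm, sub_zero] at hy
    refine le_trans (hEbd y) ?_
    split_ifs with h
    · have hu3 : |u y| ≤ 3*‖x‖ := by
        simp only [hu]
        have h1 : |(⟪x,y⟫:ℝ)| ≤ ‖x‖ * ‖y‖ := abs_real_inner_le_norm x y
        have h2 : |2*⟪x,y⟫ - ‖x‖^2| ≤ 2*|⟪x,y⟫| + ‖x‖^2 := by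
          rw [abs_sub_comm]
          refine le_trans (abs_sub _ _) ?_
          rw [abs_of_nonneg (by positivity : (0:ℝ) ≤ ‖x‖^2), abs_mul]
          norm_num
          linarith
        nlinarith [norm_nonneg y, norm_nonneg x]
      have hyD : y ∈ D := by
        rw [hD, mem_setOf_eq]
        exact le_trans h hu3
      rw [Set.indicator_of_mem hyD]
      nlinarith [sq_abs (u y), abs_nonneg (u y)]
    · exact Set.indicator_nonneg (fun _ _ => by positivity) y
  haveI : IsFiniteMeasure (μ.restrict B1) :=
    ⟨by rwa [Measure.restrict_apply_univ, lt_top_iff_ne_top]⟩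
  have hintind2 : Integrable (Set.indicator D (fun _ => 9*‖x‖^2)) (μ.restrict B1) :=
    (integrable_const _).indicator hmeasD
  have hEint : |∫ y in B1, E y ∂μ| ≤ (μ (B1 ∩ D)).toReal * (9*‖x‖^2) := by
    refine le_trans (abs_int_le _ _) ?_
    refine le_trans (MeasureTheory.setIntegral_mono_on hint_E.abs hintind2
      measurableSet_ball hED) ?_
    rw [MeasureTheory.setIntegral_indicator hmeasD, MeasureTheory.setIntegral_const, smul_eq_mul, measureReal_def]
  have hEfinal : |∫ y in B1, E y ∂μ| ≤ (162*k*unitBallVol k/r) * ‖x‖^3 := by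
    refine le_trans hEint ?_
    have hannulus := annulus_est hμ h0 hr0 hr hx0 hx8 hxr
    have h1 : (μ (B1 ∩ D)).toReal ≤ unitBallVol k * (k * (18*‖x‖/r)) := by
      refine le_trans (ENNReal.toReal_mono ENNReal.ofReal_ne_top
        (le_trans (measure_mono Set.inter_subset_right) hannulus)) ?_
      rw [ENNReal.toReal_ofReal (mul_nonneg (unitBallVol_nonneg k) (by positivity))]
    have h2 : (0:ℝ) ≤ (μ (B1 ∩ D)).toReal := ENNReal.toReal_nonneg
    refine le_trans (mul_le_mul_of_nonneg_right h1 (by positivity)) ?_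
    have heq : (unitBallVol k * (k * (18*‖x‖/r))) * (9*‖x‖^2)
        = (162*k*unitBallVol k/r) * ‖x‖^3 := by
      field_simp
      ring
    rw [heq]
  -- the linear-term bound
  have hI3 : |∫ y in Br, ⟪x,y⟫ ∂μ| ≤ ‖x‖ * (∫ y in Br, ‖y‖ ∂μ) := by
    refine le_trans (abs_int_le _ _) ?_
    rw [← MeasureTheory.integral_const_mul]
    apply integral_mono (by apply (hIr _ (by fun_prop)).abs) (by apply hIr; fun_prop)
    intro y
    exact abs_real_inner_le_norm x y
  have hK1nn : 0 ≤ ∫ y in Br, ‖y‖ ∂μ :=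
    integral_nonneg (fun y => norm_nonneg y)
  have hVnn : (0:ℝ) ≤ (μ Br).toReal := ENNReal.toReal_nonneg
  -- final assembly
  have hT : 4 * (∫ y in Br, (r^2-‖y‖^2) * ⟪x,y⟫ ∂μ)
        - 2*‖x‖^2 * (∫ y in Br, (r^2-‖y‖^2) ∂μ)
        + 4 * (∫ y in Br, ⟪x,y⟫^2 ∂μ)
      = 4*‖x‖^2 * (∫ y in Br, ⟪x,y⟫ ∂μ) - ‖x‖^4 * (μ Br).toReal - (∫ y in B1, E y ∂μ) := by
    rw [hconv1, hconv2, hPU, hU2] at hkey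
    linarith
  rw [hT]
  have habs1 : |4*‖x‖^2 * (∫ y in Br, ⟪x,y⟫ ∂μ) - ‖x‖^4 * (μ Br).toReal - (∫ y in B1, E y ∂μ)|
      ≤ 4*‖x‖^2 * |∫ y in Br, ⟪x,y⟫ ∂μ| + ‖x‖^4 * (μ Br).toReal + |∫ y in B1, E y ∂μ| := by
    have h5 := mul_le_mul_of_nonneg_left (le_abs_self (∫ y in Br, ⟪x,y⟫ ∂μ))
      (show (0:ℝ) ≤ 4*‖x‖^2 by positivity)
    have h6 := mul_le_mul_of_nonneg_left (neg_abs_le (∫ y in Br, ⟪x,y⟫ ∂μ))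
      (show (0:ℝ) ≤ 4*‖x‖^2 by positivity)
    have h7 := le_abs_self (∫ y in B1, E y ∂μ)
    have h8 := neg_abs_le (∫ y in B1, E y ∂μ)
    have h9 : (0:ℝ) ≤ ‖x‖^4 * (μ Br).toReal := by
      apply mul_le_mul_of_nonneg_left hVnn (by positivity : (0:ℝ) ≤ ‖x‖^4) |> fun h => ?_
      · exact mul_nonneg (by positivity) hVnn
    rw [abs_le]
    constructor <;> linarith
  refine le_trans habs1 ?_
  have h4 : ‖x‖^4 * (μ Br).toReal ≤ ‖x‖^3 * (μ Br).toReal := by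
    apply mul_le_mul_of_nonneg_right _ hVnn
    nlinarith [mul_nonneg (pow_nonneg (norm_nonneg x) 3) (sub_nonneg.2 hx1)]
  have hb1 : 4*‖x‖^2*|∫ y in Br, ⟪x,y⟫ ∂μ| ≤ 4*‖x‖^2*(‖x‖*(∫ y in Br, ‖y‖ ∂μ)) :=
    mul_le_mul_of_nonneg_left hI3 (by positivity)
  have heq2 : (4*(∫ y in Br, ‖y‖ ∂μ) + (μ Br).toReal + 162*k*unitBallVol k/r)*‖x‖^3
      = 4*‖x‖^2*(‖x‖*(∫ y in Br, ‖y‖ ∂μ)) + ‖x‖^3*(μ Br).toReal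
        + (162*k*unitBallVol k/r)*‖x‖^3 := by ring
  rw [heq2]
  linarith

lemma taylor2 {k : ℕ} {f : EuclideanSpace ℝ (Fin k) → ℝ} (hf : ContDiff ℝ 2 f)
    (hf0 : f 0 = 0) (hfd : fderiv ℝ f 0 = 0) (v : EuclideanSpace ℝ (Fin k)) :
    Tendsto (fun ε : ℝ => f (ε • v) / ε^2) (𝓝[>] (0:ℝ))
      (𝓝 ((fderiv ℝ (fun x => fderiv ℝ f x v) 0 v)/2)) := by
  set ψ : EuclideanSpace ℝ (Fin k) → ℝ := fun x => fderiv ℝ f x v with hψdef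
  have hcurve : ∀ s : ℝ, HasDerivAt (fun t : ℝ => t • v) v s := by
    intro s
    simpa using (hasDerivAt_id s).smul_const v
  have hfdiff : Differentiable ℝ f := hf.differentiable (by norm_num)
  have hgderiv : ∀ s : ℝ, HasDerivAt (fun t : ℝ => f (t • v)) (ψ (s • v)) s := by
    intro s
    exact ((hfdiff (s • v)).hasFDerivAt).comp_hasDerivAt s (hcurve s)
  -- ψ is differentiable at 0
  have hψdiff : DifferentiableAt ℝ ψ 0 := by
    have h1 : ContDiff ℝ 1 (fderiv ℝ f) := hf.fderiv_right (le_refl _)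
    exact ((ContinuousLinearMap.apply ℝ ℝ v).differentiableAt).comp 0
      (h1.differentiable one_ne_zero 0)
  have hψ0 : ψ 0 = 0 := by rw [hψdef]; simp [hfd]
  have hq : HasDerivAt (fun s : ℝ => ψ (s • v)) (fderiv ℝ ψ 0 v) 0 := by
    have hat : HasFDerivAt ψ (fderiv ℝ ψ 0) ((fun t:ℝ => t • v) 0) := by
      rw [show (fun t:ℝ => t • v) 0 = 0 by simp]
      exact hψdiff.hasFDerivAt
    exact hat.comp_hasDerivAt 0 (hcurve 0)
  have hslope : Tendsto (fun s : ℝ => ψ (s • v) / s) (𝓝[≠] (0:ℝ)) (𝓝 (fderiv ℝ ψ 0 v)) := by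
    have := hasDerivAt_iff_tendsto_slope.1 hq
    have hcongr : (slope (fun s : ℝ => ψ (s • v)) 0) = fun s : ℝ => ψ (s • v) / s := by
      funext s
      rw [slope_def_field]
      simp [hψ0, div_eq_inv_mul]
    rwa [hcongr] at this
  apply HasDerivAt.lhopital_zero_nhdsGT
    (f' := fun s : ℝ => ψ (s • v)) (g' := fun s : ℝ => 2*s)
  · exact Filter.Eventually.of_forall (fun s => hgderiv s)
  · apply Filter.Eventually.of_forall
    intro s
    simpa using (hasDerivAt_pow 2 s)
  · filter_upwards [self_mem_nhdsWithin] with s (hs : 0 < s)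
    positivity
  · have hcont : Continuous (fun t : ℝ => f (t • v)) :=
      hf.continuous.comp (continuous_id.smul continuous_const)
    have := (hcont.tendsto 0).mono_left (nhdsWithin_le_nhds (s := Ioi (0:ℝ)))
    simpa [hf0] using this
  · have : Tendsto (fun s : ℝ => s^2) (𝓝 (0:ℝ)) (𝓝 0) := by
      simpa using ((continuous_pow 2).tendsto (0:ℝ))
    exact this.mono_left nhdsWithin_le_nhds
  · have h2 : Tendsto (fun s : ℝ => ψ (s • v) / s / 2) (𝓝[≠] (0:ℝ)) (𝓝 (fderiv ℝ ψ 0 v / 2)) :=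
      hslope.div_const 2
    have hcongr : (fun s : ℝ => ψ (s • v) / s / 2) = fun s : ℝ => ψ (s • v) / (2*s) := by
      funext s
      rw [div_div, mul_comm]
    rw [hcongr] at h2
    exact h2.mono_left (nhdsWithin_mono 0 (fun s hs => ne_of_gt hs))

lemma unitBallVol_pos (k : ℕ) : 0 < unitBallVol k := by
  rw [unitBallVol]
  apply ENNReal.toReal_pos
  · exact ne_of_gt (measure_ball_pos volume 0 one_pos)
  · exact ne_of_lt measure_ball_lt_top

variable {n k : ℕ} {μ : Measure (Eu n)}

lemma inner_eq_sum (x y : Eu n) : (⟪x,y⟫:ℝ) = ∑ i, x i * y i := by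
  simp [PiLp.inner_apply, RCLike.inner_apply, conj_trivial, mul_comm]

lemma norm_sq_sum (v : Eu n) : ‖v‖^2 = ∑ i, (v i)^2 := by
  rw [EuclideanSpace.norm_eq, Real.sq_sqrt (by positivity)]
  congr 1; funext i; rw [Real.norm_eq_abs, sq_abs]


lemma lin_int [IsLocallyFiniteMeasure μ] {r : ℝ} (hr1 : r ≤ 1) (x : Eu n) :
    ∫ y in ball (0:Eu n) r, (r^2-‖y‖^2) * ⟪x,y⟫ ∂μ
      = ∑ i, x i * ∫ y in ball (0:Eu n) r, (r^2-‖y‖^2) * y i ∂μ := by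
  have hpw : ∀ y : Eu n, (r^2-‖y‖^2) * (⟪x,y⟫:ℝ)
      = ∑ i, x i * ((r^2-‖y‖^2) * y i) := by
    intro y
    rw [inner_eq_sum, Finset.mul_sum]
    apply Finset.sum_congr rfl
    intro i _; ring
  rw [MeasureTheory.setIntegral_congr_fun measurableSet_ball (fun y _ => hpw y),
    integral_finset_sum _ (fun i _ => (integrableOn_ball_of_continuous
      (by exact continuous_const.mul ((continuous_const.sub ((continuous_norm).pow 2)).mul
        (PiLp.continuous_apply 2 _ i))) hr1))]
  apply Finset.sum_congr rfl
  intro i _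
  rw [MeasureTheory.integral_const_mul]

lemma quad_int [IsLocallyFiniteMeasure μ] {r : ℝ} (hr1 : r ≤ 1) (x : Eu n) :
    ∫ y in ball (0:Eu n) r, (⟪x,y⟫:ℝ)^2 ∂μ
      = ∑ i, ∑ i', (x i * x i') * ∫ y in ball (0:Eu n) r, y i * y i' ∂μ := by
  have hpw : ∀ y : Eu n, (⟪x,y⟫:ℝ)^2
      = ∑ i, ∑ i', (x i * x i') * (y i * y i') := by
    intro y
    rw [inner_eq_sum, sq, Finset.sum_mul_sum]
    apply Finset.sum_congr rfl
    intro i _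
    apply Finset.sum_congr rfl
    intro i' _; ring
  rw [MeasureTheory.setIntegral_congr_fun measurableSet_ball (fun y _ => hpw y),
    integral_finset_sum _ (fun i _ => integrable_finset_sum _ (fun i' _ =>
      (integrableOn_ball_of_continuous
        (by exact continuous_const.mul ((PiLp.continuous_apply 2 _ i).mul (PiLp.continuous_apply 2 _ i'))) hr1)))]
  apply Finset.sum_congr rfl
  intro i _
  rw [integral_finset_sum _ (fun i' _ => (integrableOn_ball_of_continuous
      (by exact continuous_const.mul ((PiLp.continuous_apply 2 _ i).mul (PiLp.continuous_apply 2 _ i'))) hr1))]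
  apply Finset.sum_congr rfl
  intro i' _
  rw [MeasureTheory.integral_const_mul]






/-- the identity `Σ_{j≥k} b_j ⟨∇²φ_j(0)e, e⟩ = 1 − Q_{0,r}(e)` for every
unit vector `e ∈ S^{k-1} × {0}^{n+1-k}`. -/
theorem stmt5 (n k : ℕ) (hk : k ≤ n + 1) (μ : Measure (Eu n)) [IsLocallyFiniteMeasure μ]
    (hμ : LocUniform n k μ) (h0 : (0 : Eu n) ∈ msupp μ)
    (r r₀ : ℝ) (hr0 : 0 < r) (hr : r < 1 / 2) (hr₀ : 0 < r₀)
    (φ : Fin (n + 1) → EuclideanSpace ℝ (Fin k) → ℝ)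
    (hφC2 : ∀ j : Fin (n + 1), k ≤ (j : ℕ) → ContDiff ℝ 2 (φ j))
    (hφ0 : ∀ j : Fin (n + 1), k ≤ (j : ℕ) → φ j 0 = 0)
    (hφd : ∀ j : Fin (n + 1), k ≤ (j : ℕ) → fderiv ℝ (φ j) 0 = 0)
    (hgraph : msupp μ ∩ ball (0 : Eu n) r₀ = Set.range (graphMap n k φ) ∩ ball (0 : Eu n) r₀)
    (e : Eu n) (he : ‖e‖ = 1) (he0 : ∀ j : Fin (n + 1), k ≤ (j : ℕ) → e j = 0)
    (e' : EuclideanSpace ℝ (Fin k))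
    (he' : e' = (EuclideanSpace.equiv (Fin k) ℝ).symm (fun i => e (Fin.castLE hk i))) :
    ∑ j ∈ Finset.univ.filter (fun j : Fin (n + 1) => k ≤ (j : ℕ)),
        ((((k : ℝ) + 2) / (2 * unitBallVol k * r ^ (k + 2))) *
          ∫ y in ball (0 : Eu n) r, (r ^ 2 - ‖y‖ ^ 2) * y j ∂μ) *
          (fderiv ℝ (fun x => fderiv ℝ (φ j) x e') 0 e')
      = 1 - (((k : ℝ) + 2) / (unitBallVol k * r ^ (k + 2))) *
          ∫ y in ball (0 : Eu n) r, ⟪e, y⟫ ^ 2 ∂μ := by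
  have hr1 : r ≤ 1 := by linarith
  set l := 𝓝[>] (0:ℝ) with hl
  set Br := ball (0:Eu n) r with hBr
  set m : Fin (n+1) → ℝ := fun j => ∫ y in Br, (r^2 - ‖y‖^2) * y j ∂μ with hm
  set Mij : Fin (n+1) → Fin (n+1) → ℝ := fun i i' => ∫ y in Br, y i * y i' ∂μ with hMij
  set M₀ : ℝ := ∫ y in Br, (r^2 - ‖y‖^2) ∂μ with hM₀
  set Qe : ℝ := ∫ y in Br, (⟪e,y⟫:ℝ)^2 ∂μ with hQe
  set hh : Fin (n+1) → ℝ := fun j => fderiv ℝ (fun x => fderiv ℝ (φ j) x e') 0 e' with hhh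
  set X : ℝ → Eu n := fun ε => graphMap n k φ (ε • e') with hX
  set P : Finset (Fin (n+1)) := Finset.univ.filter (fun j : Fin (n+1) => k ≤ (j:ℕ)) with hP
  set NP : Finset (Fin (n+1)) := Finset.univ.filter (fun j : Fin (n+1) => ¬ k ≤ (j:ℕ)) with hNP
  -- components of X
  have hXc : ∀ (ε : ℝ) (i : Fin (n+1)), (i:ℕ) < k → X ε i = ε * e i := by
    intro ε i hi
    have h1 : X ε i = (ε • e') ⟨i, hi⟩ := by
      show (if h : (i : ℕ) < k then (ε • e') ⟨i, h⟩ else φ i (ε • e')) = _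
      rw [dif_pos hi]
    rw [h1, he']
    show ε * e (Fin.castLE hk ⟨i, hi⟩) = ε * e i
    congr 1
  have hXc2 : ∀ (ε : ℝ) (i : Fin (n+1)), k ≤ (i:ℕ) → X ε i = φ i (ε • e') := by
    intro ε i hi
    show (if h : (i : ℕ) < k then (ε • e') ⟨i, h⟩ else φ i (ε • e')) = _
    rw [dif_neg (not_lt.2 hi)]
  -- basic limits
  have hesum : ∑ i, (e i)^2 = 1 := by
    rw [← norm_sq_sum, he]; norm_num
  have heps : ∀ᶠ ε in l, (0:ℝ) < ε := self_mem_nhdsWithin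
  have hXi : ∀ i : Fin (n+1), Tendsto (fun ε => X ε i / ε) l (𝓝 (e i)) := by
    intro i
    by_cases hi : (i:ℕ) < k
    · apply Tendsto.congr' _ (tendsto_const_nhds (x := e i))
      filter_upwards [heps] with ε hε
      rw [hXc ε i hi, mul_comm, mul_div_assoc, div_self (ne_of_gt hε), mul_one]
    · have hik : k ≤ (i:ℕ) := not_lt.1 hi
      have htay := taylor2 (hφC2 i hik) (hφ0 i hik) (hφd i hik) e'
      have h2 : Tendsto (fun ε : ℝ => ε * (φ i (ε • e') / ε^2)) l (𝓝 (0 * (hh i / 2))) := by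
        exact Tendsto.mul ((tendsto_id.mono_left nhdsWithin_le_nhds)) htay
      rw [zero_mul] at h2
      rw [he0 i hik]
      apply Tendsto.congr' _ h2
      filter_upwards [heps] with ε hε
      rw [hXc2 ε i hik]
      field_simp
  have hX2 : Tendsto (fun ε => ‖X ε‖^2/ε^2) l (𝓝 1) := by
    have h1 : Tendsto (fun ε => ∑ i, (X ε i / ε)^2) l (𝓝 (∑ i, (e i)^2)) :=
      tendsto_finset_sum _ (fun i _ => (hXi i).pow 2)
    rw [hesum] at h1
    apply Tendsto.congr' _ h1
    filter_upwards [heps] with ε hε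
    rw [norm_sq_sum, Finset.sum_div]
    apply Finset.sum_congr rfl
    intro i _
    rw [div_pow]
  -- lower bound ε ≤ ‖X ε‖
  have hfsum : ∑ i ∈ NP, (e i)^2 = 1 := by
    rw [← hesum]
    apply Finset.sum_subset (Finset.filter_subset _ _)
    intro i _ hni
    have hki : k ≤ (i:ℕ) := by
      by_contra hcon
      exact hni (Finset.mem_filter.2 ⟨Finset.mem_univ i, hcon⟩)
    rw [he0 i hki]
    norm_num
  have hlow : ∀ ε : ℝ, 0 < ε → ε ≤ ‖X ε‖ := by
    intro ε hε
    have h1 : ∑ i ∈ NP, (X ε i)^2 ≤ ∑ i, (X ε i)^2 :=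
      Finset.sum_le_sum_of_subset_of_nonneg (Finset.filter_subset _ _)
        (fun i _ _ => sq_nonneg _)
    have h2 : ∑ i ∈ NP, (X ε i)^2 = ε^2 * ∑ i ∈ NP, (e i)^2 := by
      rw [Finset.mul_sum]
      apply Finset.sum_congr rfl
      intro i hi
      rw [hNP, Finset.mem_filter] at hi
      rw [hXc ε i (not_le.1 hi.2)]
      ring
    rw [hfsum, mul_one] at h2
    have h3 : ε^2 ≤ ‖X ε‖^2 := by rw [norm_sq_sum]; linarith
    nlinarith [norm_nonneg (X ε)]
  -- upper bound eventually
  have hupper : ∀ᶠ ε in l, ‖X ε‖ ≤ 2*ε := by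
    have h4 : ∀ᶠ ε in l, ‖X ε‖^2/ε^2 < 4 := hX2.eventually_lt_const (by norm_num)
    filter_upwards [h4, heps] with ε h4 hε
    rw [div_lt_iff₀ (by positivity)] at h4
    nlinarith [norm_nonneg (X ε)]
  have hsmall : ∀ c : ℝ, 0 < c → ∀ᶠ ε in l, ε < c := by
    intro c hc
    exact Filter.Eventually.filter_mono nhdsWithin_le_nhds
      ((tendsto_id (x := 𝓝 (0:ℝ))).eventually_lt_const hc)
  -- membership in msupp
  have hmem : ∀ᶠ ε in l, X ε ∈ msupp μ := by
    filter_upwards [hupper, hsmall (r₀/2) (by positivity), heps] with ε hup hεr hε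
    have hballmem : X ε ∈ ball (0:Eu n) r₀ := by
      rw [mem_ball, dist_zero_right]
      linarith
    have h1 : X ε ∈ Set.range (graphMap n k φ) ∩ ball (0:Eu n) r₀ :=
      ⟨⟨ε • e', rfl⟩, hballmem⟩
    rw [← hgraph] at h1
    exact h1.1
  -- apply key estimate
  obtain ⟨C, hC⟩ := key_est hμ h0 hr0 hr
  have hδ : (0:ℝ) < min (1/8) (r^2/8) := by
    apply lt_min <;> positivity
  have hA : ∀ᶠ ε in l,
      |4 * (∫ y in Br, (r^2-‖y‖^2) * ⟪X ε,y⟫ ∂μ) - 2*‖X ε‖^2 * M₀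
        + 4 * (∫ y in Br, ⟪X ε,y⟫^2 ∂μ)| ≤ |C| * (2*ε)^3 := by
    filter_upwards [hmem, hupper, hsmall (min (1/8) (r^2/8) / 2) (by positivity), heps]
      with ε hm hup hεδ hε
    have hx0 : 0 < ‖X ε‖ := lt_of_lt_of_le hε (hlow ε hε)
    have hxδ : ‖X ε‖ ≤ min (1/8) (r^2/8) := by
      refine le_trans hup ?_
      linarith
    have h1 := hC (X ε) hm hx0 hxδ
    refine le_trans h1 ?_
    calc C * ‖X ε‖^3 ≤ |C| * ‖X ε‖^3 :=
          mul_le_mul_of_nonneg_right (le_abs_self C) (by positivity)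
      _ ≤ |C| * (2*ε)^3 := by
          apply mul_le_mul_of_nonneg_left _ (abs_nonneg C)
          apply pow_le_pow_left₀ (norm_nonneg _) hup
  have hA0 : Tendsto (fun ε => (4 * (∫ y in Br, (r^2-‖y‖^2) * ⟪X ε,y⟫ ∂μ)
      - 2*‖X ε‖^2 * M₀ + 4 * (∫ y in Br, ⟪X ε,y⟫^2 ∂μ))/ε^2) l (𝓝 0) := by
    have hg0 : Tendsto (fun ε : ℝ => 8 * |C| * ε) l (𝓝 0) := by
      have := ((tendsto_id (x := 𝓝 (0:ℝ))).const_mul (8 * |C|)).mono_left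
        (nhdsWithin_le_nhds (s := Ioi (0:ℝ)))
      simpa using this
    apply squeeze_zero_norm' _ hg0
    filter_upwards [hA, heps] with ε hA hε
    rw [Real.norm_eq_abs, abs_div, abs_of_pos (by positivity : (0:ℝ) < ε^2),
      div_le_iff₀ (by positivity)]
    refine le_trans hA (le_of_eq ?_)
    ring
  -- expansions
  set c₁ : ℝ := ∑ i ∈ NP, e i * m i with hc₁
  have hI1exp : ∀ ε : ℝ, (∫ y in Br, (r^2-‖y‖^2) * ⟪X ε,y⟫ ∂μ)
      = ε * c₁ + ∑ j ∈ P, φ j (ε • e') * m j := by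
    intro ε
    rw [lin_int hr1 (X ε)]
    rw [← Finset.sum_filter_add_sum_filter_not Finset.univ (fun j : Fin (n+1) => k ≤ (j:ℕ))
      (fun i => X ε i * m i)]
    rw [add_comm]
    congr 1
    · rw [Finset.mul_sum]
      apply Finset.sum_congr rfl
      intro i hi
      rw [Finset.mem_filter] at hi
      rw [hXc ε i (not_le.1 hi.2)]
      ring
    · apply Finset.sum_congr rfl
      intro j hj
      rw [Finset.mem_filter] at hj
      rw [hXc2 ε j hj.2]
  have hSlim : Tendsto (fun ε => (∑ j ∈ P, φ j (ε • e') * m j)/ε^2) l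
      (𝓝 (∑ j ∈ P, (hh j / 2) * m j)) := by
    have h1 : Tendsto (fun ε => ∑ j ∈ P, (φ j (ε • e')/ε^2) * m j) l
        (𝓝 (∑ j ∈ P, (hh j / 2) * m j)) := by
      apply tendsto_finset_sum
      intro j hj
      rw [hP, Finset.mem_filter] at hj
      exact (taylor2 (hφC2 j hj.2) (hφ0 j hj.2) (hφd j hj.2) e').mul_const (m j)
    apply Tendsto.congr' _ h1
    apply Filter.Eventually.of_forall
    intro ε
    dsimp only
    rw [Finset.sum_div]
    apply Finset.sum_congr rfl
    intro j _
    rw [div_mul_eq_mul_div]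
  have hQlim : Tendsto (fun ε => (∫ y in Br, ⟪X ε,y⟫^2 ∂μ)/ε^2) l (𝓝 Qe) := by
    have h1 : Tendsto (fun ε => ∑ i, ∑ i', ((X ε i/ε) * (X ε i'/ε)) * Mij i i') l
        (𝓝 (∑ i, ∑ i', (e i * e i') * Mij i i')) := by
      apply tendsto_finset_sum
      intro i _
      apply tendsto_finset_sum
      intro i' _
      exact ((hXi i).mul (hXi i')).mul_const _
    have h2 : Qe = ∑ i, ∑ i', (e i * e i') * Mij i i' := quad_int hr1 e
    rw [h2]
    apply Tendsto.congr' _ h1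
    filter_upwards [heps] with ε hε
    rw [quad_int hr1 (X ε), Finset.sum_div]
    apply Finset.sum_congr rfl
    intro i _
    rw [Finset.sum_div]
    apply Finset.sum_congr rfl
    intro i' _
    rw [div_mul_div_comm, div_mul_eq_mul_div, pow_two]
  -- the function R and its limit
  have hR : Tendsto (fun ε => 4*((∑ j ∈ P, φ j (ε • e') * m j)/ε^2)
      - 2*(‖X ε‖^2/ε^2 * M₀) + 4*((∫ y in Br, ⟪X ε,y⟫^2 ∂μ)/ε^2)) l
      (𝓝 (4*(∑ j ∈ P, (hh j / 2) * m j) - 2*(1*M₀) + 4*Qe)) := by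
    exact ((hSlim.const_mul 4).sub ((hX2.mul_const M₀).const_mul 2)).add (hQlim.const_mul 4)
  -- identify A with c₁/ε + R
  have hAR : ∀ᶠ ε in l, (4 * (∫ y in Br, (r^2-‖y‖^2) * ⟪X ε,y⟫ ∂μ)
      - 2*‖X ε‖^2 * M₀ + 4 * (∫ y in Br, ⟪X ε,y⟫^2 ∂μ))/ε^2
      = (4*c₁)/ε + (4*((∑ j ∈ P, φ j (ε • e') * m j)/ε^2)
        - 2*(‖X ε‖^2/ε^2 * M₀) + 4*((∫ y in Br, ⟪X ε,y⟫^2 ∂μ)/ε^2)) := by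
    filter_upwards [heps] with ε hε
    rw [hI1exp ε]
    field_simp
    ring
  have hc₁0 : c₁ = 0 := by
    have h1 : Tendsto (fun ε => (4*c₁)/ε) l
        (𝓝 (0 - (4*(∑ j ∈ P, (hh j / 2) * m j) - 2*(1*M₀) + 4*Qe))) := by
      have h2 := hA0.sub hR
      apply Tendsto.congr' _ h2
      filter_upwards [hAR] with ε hAR
      rw [hAR]
      ring
    have := const_div_tendsto h1
    linarith
  have hL0 : 4*(∑ j ∈ P, (hh j / 2) * m j) - 2*(1*M₀) + 4*Qe = 0 := by
    have h1 : Tendsto (fun ε => (4 * (∫ y in Br, (r^2-‖y‖^2) * ⟪X ε,y⟫ ∂μ)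
        - 2*‖X ε‖^2 * M₀ + 4 * (∫ y in Br, ⟪X ε,y⟫^2 ∂μ))/ε^2) l
        (𝓝 (4*(∑ j ∈ P, (hh j / 2) * m j) - 2*(1*M₀) + 4*Qe)) := by
      apply Tendsto.congr' _ hR
      filter_upwards [hAR] with ε hAR
      rw [hAR, hc₁0]
      norm_num
    exact tendsto_nhds_unique h1 hA0
  -- final algebra
  have hsum : ∑ j ∈ P, m j * hh j = M₀ - 2*Qe := by
    have h1 : ∑ j ∈ P, m j * hh j = 2 * ∑ j ∈ P, (hh j / 2) * m j := by
      rw [Finset.mul_sum]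
      apply Finset.sum_congr rfl
      intro j _
      ring
    rw [h1]
    linarith
  have hM0v : M₀ = 2 * unitBallVol k * r^(k+2) / ((k:ℝ)+2) := M0_val hμ h0 hr0 hr1
  have hω : 0 < unitBallVol k := unitBallVol_pos k
  have htarget : ∑ j ∈ P, ((((k:ℝ) + 2) / (2 * unitBallVol k * r ^ (k + 2))) * m j) * hh j
      = (((k:ℝ) + 2) / (2 * unitBallVol k * r ^ (k + 2))) * ∑ j ∈ P, m j * hh j := by
    rw [Finset.mul_sum]
    apply Finset.sum_congr rfl
    intro j _
    ring
  calc ∑ j ∈ P, ((((k:ℝ) + 2) / (2 * unitBallVol k * r ^ (k + 2))) * m j) * hh j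
      = (((k:ℝ) + 2) / (2 * unitBallVol k * r ^ (k + 2))) * (M₀ - 2*Qe) := by
        rw [htarget, hsum]
    _ = 1 - (((k:ℝ) + 2) / (unitBallVol k * r ^ (k + 2))) * Qe := by
        rw [hM0v]
        have hk2 : ((k:ℝ) + 2) ≠ 0 := by positivity
        have hrk : r^(k+2) ≠ 0 := by positivity
        field_simp
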